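/- arXiv:2202.04050 — 2 statements merged into one kernel-verified Lean document; each statement's English description precedes it below -/
import Mathlib

section
/- Let N ≥ 2 and let σ, σ' : Fin T → {0,1} be two sequences that are reverses of each other, i.e., σ'(t) = σ(T−1−t) for all t. Define Γ_σ(k,ℓ) = ∏_{j=k}^{ℓ} (1 − σ(j)/N). Then ∑_{t=0}^{T−1} ∑_{ℓ=0}^{t} Γ_σ(ℓ,t) = ∑_{t=0}^{T−1} ∑_{ℓ=0}^{t} Γ_{σ'}(ℓ,t). -/
theorem stmt_3 (N : ℕ) (hN : 2 ≤ N) (T : ℕ) (σ σ' : ℕ → ℝ)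
    (hσ : ∀ t, σ t = 0 ∨ σ t = 1)
    (hrev : ∀ t < T, σ' t = σ (T - 1 - t)) :
    ∑ t ∈ Finset.range T, ∑ ℓ ∈ Finset.range (t + 1),
        ∏ j ∈ Finset.Icc ℓ t, (1 - σ j / N)
      = ∑ t ∈ Finset.range T, ∑ ℓ ∈ Finset.range (t + 1),
        ∏ j ∈ Finset.Icc ℓ t, (1 - σ' j / N) := by
  rw [Finset.sum_sigma' (Finset.range T) (fun t => Finset.range (t+1)) (fun t ℓ => ∏ j ∈ Finset.Icc ℓ t, (1 - σ j / N)), Finset.sum_sigma' (Finset.range T) (fun t => Finset.range (t+1)) (fun t ℓ => ∏ j ∈ Finset.Icc ℓ t, (1 - σ' j / N))]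
  refine Finset.sum_nbij' (fun p => ⟨T - 1 - p.2, T - 1 - p.1⟩)
    (fun p => ⟨T - 1 - p.2, T - 1 - p.1⟩) ?_ ?_ ?_ ?_ ?_
  · intro p hp
    simp only [Finset.mem_sigma, Finset.mem_range] at hp ⊢
    omega
  · intro p hp
    simp only [Finset.mem_sigma, Finset.mem_range] at hp ⊢
    omega
  · intro p hp
    simp only [Finset.mem_sigma, Finset.mem_range] at hp
    ext <;> simp <;> omega
  · intro p hp
    simp only [Finset.mem_sigma, Finset.mem_range] at hp
    ext <;> simp <;> omega
  · intro p hp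
    simp only [Finset.mem_sigma, Finset.mem_range] at hp
    refine Finset.prod_nbij' (fun j => T - 1 - j) (fun j => T - 1 - j) ?_ ?_ ?_ ?_ ?_
    · intro j hj
      simp only [Finset.mem_Icc] at hj ⊢
      omega
    · intro j hj
      simp only [Finset.mem_Icc] at hj ⊢
      omega
    · intro j hj
      simp only [Finset.mem_Icc] at hj
      omega
    · intro j hj
      simp only [Finset.mem_Icc] at hj
      omega
    · intro j hj
      simp only [Finset.mem_Icc] at hj
      rw [hrev (T - 1 - j) (by omega)]
      have h : T - 1 - (T - 1 - j) = j := by omega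
      rw [h]
end

section
/- Fix a real q ∈ (0,1). For two 0-1 sequences σ, σ' on {1,…,T} with the same number of zeros, if for every interval [k,ℓ] ⊆ {1,…,T} the number of zeros of σ' in [k,ℓ] is at least the number of zeros of σ in [k,ℓ], then ∑_{t=1}^{T} ∑_{ℓ=1}^{t} ∏_{j=ℓ}^{t} q^{σ(j)} ≤ ∑_{t=1}^{T} ∑_{ℓ=1}^{t} ∏_{j=ℓ}^{t} q^{σ'(j)}. -/
lemma sum_sigma_eq (σ : ℕ → ℕ) (hσ : ∀ j, σ j = 0 ∨ σ j = 1) (s : Finset ℕ) :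
    ∑ j ∈ s, σ j = s.card - (s.filter (fun j => σ j = 0)).card := by
  have hsplit := Finset.card_filter_add_card_filter_not
    (s := s) (p := fun j => σ j = 0)
  have hsum : ∑ j ∈ s, σ j = (s.filter (fun j => ¬ σ j = 0)).card := by
    rw [Finset.card_eq_sum_ones, Finset.sum_filter]
    apply Finset.sum_congr rfl
    intro j _
    rcases hσ j with h | h <;> simp [h]
  omega

theorem stmt_4 (q : ℝ) (hq0 : 0 < q) (hq1 : q < 1) (T : ℕ) (σ σ' : ℕ → ℕ)
    (hσ : ∀ j, σ j = 0 ∨ σ j = 1) (hσ' : ∀ j, σ' j = 0 ∨ σ' j = 1)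
    (hsame : ((Finset.Icc 1 T).filter (fun j => σ j = 0)).card
      = ((Finset.Icc 1 T).filter (fun j => σ' j = 0)).card)
    (hdom : ∀ k ℓ, 1 ≤ k → ℓ ≤ T →
      ((Finset.Icc k ℓ).filter (fun j => σ j = 0)).card
        ≤ ((Finset.Icc k ℓ).filter (fun j => σ' j = 0)).card) :
    ∑ t ∈ Finset.Icc 1 T, ∑ ℓ ∈ Finset.Icc 1 t, ∏ j ∈ Finset.Icc ℓ t, q ^ σ j
      ≤ ∑ t ∈ Finset.Icc 1 T, ∑ ℓ ∈ Finset.Icc 1 t, ∏ j ∈ Finset.Icc ℓ t, q ^ σ' j := by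
  apply Finset.sum_le_sum
  intro t ht
  apply Finset.sum_le_sum
  intro ℓ hℓ
  rw [Finset.mem_Icc] at ht hℓ
  rw [Finset.prod_pow_eq_pow_sum, Finset.prod_pow_eq_pow_sum,
    sum_sigma_eq σ hσ, sum_sigma_eq σ' hσ']
  have hz := hdom ℓ t hℓ.1 ht.2
  have hle : (Finset.Icc ℓ t).filter (fun j => σ' j = 0) ⊆ Finset.Icc ℓ t :=
    Finset.filter_subset _ _
  have hcard := Finset.card_le_card hle
  exact pow_le_pow_of_le_one hq0.le hq1.le (by omega)
end
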